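/- Let b, c : [0,∞) → (0,∞) be continuous with b ≤ c, let w solve w'' + b·w = 0 and y solve y'' + c·y = 0, both with value 0 and derivative 1 at 0. Then on any interval (0, r] where y > 0, Picone's identity holds: (w(r)/y(r))·(w'(r)y(r) − w(r)y'(r)) = ∫₀^r (c(x) − b(x))·w(x)² dx + ∫₀^r ((w'(x)y(x) − w(x)y'(x))/y(x))² dx. -/

import Mathlib

open Real Set intervalIntegral Filter Topology

/-- Picone's identity for the two solutions `w` (of `w'' + b w = 0`) and `y` (of
`y'' + c y = 0`), both with value `0` and derivative `1` at `0`: on any interval `(0, r]`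
where `y > 0`,
`(w r / y r)(w' r · y r − w r · y' r) = ∫₀^r (c − b) w² + ∫₀^r ((w' y − w y')/y)²`. -/
theorem stmt_17 (b c w y : ℝ → ℝ)
    (hb_cont : ContinuousOn b (Set.Ici 0))
    (hc_cont : ContinuousOn c (Set.Ici 0))
    (hb_pos : ∀ r : ℝ, 0 ≤ r → 0 < b r)
    (hc_pos : ∀ r : ℝ, 0 ≤ r → 0 < c r)
    (hbc : ∀ r : ℝ, 0 ≤ r → b r ≤ c r)
    (hw : ContDiff ℝ 2 w) (hy : ContDiff ℝ 2 y)
    (hwode : ∀ r : ℝ, 0 ≤ r → deriv (deriv w) r + b r * w r = 0)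
    (hyode : ∀ r : ℝ, 0 ≤ r → deriv (deriv y) r + c r * y r = 0)
    (hw0 : w 0 = 0) (hw0' : deriv w 0 = 1)
    (hy0 : y 0 = 0) (hy0' : deriv y 0 = 1)
    (r : ℝ) (hr : 0 < r)
    (hypos : ∀ x : ℝ, 0 < x → x ≤ r → 0 < y x) :
    (w r / y r) * (deriv w r * y r - w r * deriv y r)
      = (∫ x in (0 : ℝ)..r, (c x - b x) * (w x) ^ 2)
        + ∫ x in (0 : ℝ)..r, ((deriv w x * y x - w x * deriv y x) / y x) ^ 2 := by
  -- Smoothness facts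
  rw [show (2 : WithTop ℕ∞) = 1 + 1 from rfl, contDiff_succ_iff_deriv] at hw hy
  obtain ⟨hwd, -, hw1⟩ := hw
  obtain ⟨hyd, -, hy1⟩ := hy
  have hwd' : Differentiable ℝ (deriv w) := hw1.differentiable one_ne_zero
  have hyd' : Differentiable ℝ (deriv y) := hy1.differentiable one_ne_zero
  -- Notation
  set W : ℝ → ℝ := fun x => deriv w x * y x - w x * deriv y x with hWdef
  set f₁ : ℝ → ℝ := fun x => (c x - b x) * (w x) ^ 2 with hf₁def
  set f₂ : ℝ → ℝ := fun x => (W x / y x) ^ 2 with hf₂def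
  set G : ℝ → ℝ := fun x => (w x / y x) * W x with hGdef
  have hWcont : Continuous W :=
    (hwd'.continuous.mul hyd.continuous).sub (hwd.continuous.mul hyd'.continuous)
  have hW0 : W 0 = 0 := by simp [hWdef, hw0, hy0]
  -- Derivative of W
  have hWode : ∀ x : ℝ, 0 ≤ x → HasDerivAt W ((c x - b x) * (w x * y x)) x := by
    intro x hx
    have h1 : HasDerivAt (fun t => deriv w t * y t)
        (deriv (deriv w) x * y x + deriv w x * deriv y x) x :=
      (hwd' x).hasDerivAt.mul (hyd x).hasDerivAt
    have h2 : HasDerivAt (fun t => w t * deriv y t)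
        (deriv w x * deriv y x + w x * deriv (deriv y) x) x :=
      (hwd x).hasDerivAt.mul (hyd' x).hasDerivAt
    have e1 : deriv (deriv w) x = -(b x * w x) := by linarith [hwode x hx]
    have e2 : deriv (deriv y) x = -(c x * y x) := by linarith [hyode x hx]
    have := h1.sub h2
    refine this.congr_deriv ?_
    rw [e1, e2]; ring
  -- Derivative of G on (0, r]
  have hGd : ∀ x : ℝ, 0 < x → x ≤ r → HasDerivAt G (f₁ x + f₂ x) x := by
    intro x hx hxr
    have hyx : y x ≠ 0 := (hypos x hx hxr).ne'
    have hdiv : HasDerivAt (fun t => w t / y t)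
        ((deriv w x * y x - w x * deriv y x) / (y x) ^ 2) x :=
      (hwd x).hasDerivAt.div (hyd x).hasDerivAt hyx
    have := hdiv.mul (hWode x hx.le)
    refine this.congr_deriv ?_
    simp only [hf₁def, hf₂def, hWdef]
    field_simp
    ring
  -- Continuity of the integrands on [0, r]
  have hf1cont : ContinuousOn f₁ (Icc 0 r) := by
    refine ContinuousOn.mul ?_ ((hwd.continuous.pow 2).continuousOn)
    exact (hc_cont.sub hb_cont).mono (Icc_subset_Ici_self)
  -- slope limits at 0
  have hslope : ∀ f : ℝ → ℝ, ∀ l : ℝ, f 0 = 0 → HasDerivAt f l 0 →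
      Tendsto (fun t => f t / t) (𝓝[>] (0:ℝ)) (𝓝 l) := by
    intro f l hf0 hfd
    have h := hasDerivAt_iff_tendsto_slope.mp hfd
    have h2 : Tendsto (slope f 0) (𝓝[>] (0:ℝ)) (𝓝 l) :=
      h.mono_left (nhdsWithin_mono _ (fun t ht => ne_of_gt ht))
    refine h2.congr (fun t => ?_)
    simp [slope_def_field, hf0]
  have hyslope : Tendsto (fun t => y t / t) (𝓝[>] (0:ℝ)) (𝓝 1) := by
    have := hslope y (deriv y 0) hy0 (hyd 0).hasDerivAt
    rwa [hy0'] at this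
  have hwslope : Tendsto (fun t => w t / t) (𝓝[>] (0:ℝ)) (𝓝 1) := by
    have := hslope w (deriv w 0) hw0 (hwd 0).hasDerivAt
    rwa [hw0'] at this
  have hWslope : Tendsto (fun t => W t / t) (𝓝[>] (0:ℝ)) (𝓝 0) := by
    have := hslope W ((c 0 - b 0) * (w 0 * y 0)) hW0 (hWode 0 le_rfl)
    simpa [hw0] using this
  have hIoc : Ioc (0:ℝ) r ∈ 𝓝[>] (0:ℝ) := Ioc_mem_nhdsGT hr
  -- limit of W/y at 0⁺
  have hWy : Tendsto (fun t => W t / y t) (𝓝[>] (0:ℝ)) (𝓝 0) := by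
    have h := hWslope.div hyslope one_ne_zero
    rw [show (0:ℝ)/1 = 0 by norm_num] at h
    refine h.congr' ?_
    filter_upwards [hIoc, self_mem_nhdsWithin] with t ht ht0
    have hyt : y t ≠ 0 := (hypos t ht.1 ht.2).ne'
    have ht0' : (t:ℝ) ≠ 0 := ne_of_gt ht0
    simp only [Pi.div_apply]
    field_simp
  -- limit of w/y at 0⁺
  have hwy : Tendsto (fun t => w t / y t) (𝓝[>] (0:ℝ)) (𝓝 1) := by
    have h := hwslope.div hyslope one_ne_zero
    rw [show (1:ℝ)/1 = 1 by norm_num] at h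
    refine h.congr' ?_
    filter_upwards [hIoc, self_mem_nhdsWithin] with t ht ht0
    have hyt : y t ≠ 0 := (hypos t ht.1 ht.2).ne'
    have ht0' : (t:ℝ) ≠ 0 := ne_of_gt ht0
    simp only [Pi.div_apply]
    field_simp
  -- G tends to 0 at 0⁺
  have hGlim : Tendsto G (𝓝[>] (0:ℝ)) (𝓝 0) := by
    have hWlim : Tendsto W (𝓝[>] (0:ℝ)) (𝓝 0) := by
      have := hWcont.continuousAt (x := 0)
      rw [ContinuousAt, hW0] at this
      exact this.mono_left nhdsWithin_le_nhds
    have := hwy.mul hWlim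
    simpa using this
  -- continuity of f₂ on [0, r]
  have hf2cont : ContinuousOn f₂ (Icc 0 r) := by
    intro x hx
    rcases eq_or_lt_of_le hx.1 with h0 | h0
    · subst h0
      have hf20 : f₂ 0 = 0 := by simp [hf₂def, hW0]
      rw [ContinuousWithinAt, hf20]
      have hlim : Tendsto f₂ (𝓝[>] (0:ℝ)) (𝓝 0) := by
        have := hWy.pow 2
        simpa [hf₂def] using this
      have hsub : Icc (0:ℝ) r ⊆ insert 0 (Ioi 0) := by
        intro t ht
        rcases eq_or_lt_of_le ht.1 with h | h
        · exact Or.inl h.symm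
        · exact Or.inr h
      refine Tendsto.mono_left ?_ (nhdsWithin_mono _ hsub)
      rw [nhdsWithin_insert]
      refine Tendsto.sup ?_ hlim
      simpa [hf₂def, hW0] using tendsto_pure_nhds f₂ 0 |>.congr (fun _ => rfl) |>.mono_right
        (le_refl _)
    · have hyx : y x ≠ 0 := (hypos x h0 hx.2).ne'
      exact ((hWcont.continuousAt.div (hyd.continuous.continuousAt) hyx).pow 2).continuousWithinAt
  -- interval integrability on [0, r]
  have huIcc : uIcc (0:ℝ) r = Icc 0 r := uIcc_of_le hr.le
  have hint1 : IntervalIntegrable f₁ MeasureTheory.volume 0 r := by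
    apply ContinuousOn.intervalIntegrable; rwa [huIcc]
  have hint2 : IntervalIntegrable f₂ MeasureTheory.volume 0 r := by
    apply ContinuousOn.intervalIntegrable; rwa [huIcc]
  -- FTC on [ε, r] and splitting
  have key : ∀ ε : ℝ, ε ∈ Ioo (0:ℝ) r →
      G r - G ε = ((∫ x in (0:ℝ)..r, f₁ x) + ∫ x in (0:ℝ)..r, f₂ x)
        - ((∫ x in (0:ℝ)..ε, f₁ x) + ∫ x in (0:ℝ)..ε, f₂ x) := by
    intro ε hε
    have hεr : ε ≤ r := hε.2.le
    have huIcc' : uIcc ε r = Icc ε r := uIcc_of_le hεr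
    have hsub : uIcc ε r ⊆ uIcc 0 r := by
      rw [huIcc, huIcc']; exact Icc_subset_Icc hε.1.le le_rfl
    have hsub0 : uIcc 0 ε ⊆ uIcc 0 r := by
      rw [huIcc, uIcc_of_le hε.1.le]; exact Icc_subset_Icc le_rfl hεr
    have h1ε : IntervalIntegrable f₁ MeasureTheory.volume ε r := hint1.mono_set hsub
    have h2ε : IntervalIntegrable f₂ MeasureTheory.volume ε r := hint2.mono_set hsub
    have h10 : IntervalIntegrable f₁ MeasureTheory.volume 0 ε := hint1.mono_set hsub0
    have h20 : IntervalIntegrable f₂ MeasureTheory.volume 0 ε := hint2.mono_set hsub0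
    have hftc : ∫ x in ε..r, (f₁ x + f₂ x) = G r - G ε := by
      apply integral_eq_sub_of_hasDerivAt
      · intro x hx
        rw [huIcc'] at hx
        exact hGd x (lt_of_lt_of_le hε.1 hx.1) hx.2
      · exact h1ε.add h2ε
    rw [← hftc, integral_add h1ε h2ε]
    have e1 := integral_add_adjacent_intervals h10 h1ε
    have e2 := integral_add_adjacent_intervals h20 h2ε
    linarith
  -- take the limit ε → 0⁺
  have hne : (𝓝[>] (0:ℝ)).NeBot := nhdsGT_neBot 0
  have hprim : ∀ f : ℝ → ℝ, IntervalIntegrable f MeasureTheory.volume 0 r →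
      Tendsto (fun ε => ∫ x in (0:ℝ)..ε, f x) (𝓝[>] (0:ℝ)) (𝓝 0) := by
    intro f hf
    have hc := continuousOn_primitive_interval' hf (left_mem_uIcc)
    have h0 : (0:ℝ) ∈ uIcc 0 r := left_mem_uIcc
    have := (hc 0 h0)
    rw [ContinuousWithinAt] at this
    simp only [intervalIntegral.integral_same] at this
    refine this.mono_left ?_
    rw [← nhdsWithin_Ioc_eq_nhdsGT hr]
    refine nhdsWithin_mono _ ?_
    rw [huIcc]
    exact Ioc_subset_Icc_self
  have hlhs : Tendsto (fun ε => G r - G ε) (𝓝[>] (0:ℝ)) (𝓝 (G r)) := by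
    have := tendsto_const_nhds (f := 𝓝[>] (0:ℝ)) (x := G r) |>.sub hGlim
    simpa using this
  have hrhs : Tendsto (fun ε => ((∫ x in (0:ℝ)..r, f₁ x) + ∫ x in (0:ℝ)..r, f₂ x)
        - ((∫ x in (0:ℝ)..ε, f₁ x) + ∫ x in (0:ℝ)..ε, f₂ x)) (𝓝[>] (0:ℝ))
      (𝓝 ((∫ x in (0:ℝ)..r, f₁ x) + ∫ x in (0:ℝ)..r, f₂ x)) := by
    have := tendsto_const_nhds (f := 𝓝[>] (0:ℝ))
        (x := (∫ x in (0:ℝ)..r, f₁ x) + ∫ x in (0:ℝ)..r, f₂ x)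
      |>.sub ((hprim f₁ hint1).add (hprim f₂ hint2))
    simpa using this
  have heq : G r = (∫ x in (0:ℝ)..r, f₁ x) + ∫ x in (0:ℝ)..r, f₂ x := by
    refine tendsto_nhds_unique (hlhs.congr' ?_) hrhs
    filter_upwards [Ioo_mem_nhdsGT hr] with ε hε
    exact key ε hε
  exact heq
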